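/- Let A be a real n×d matrix, b ∈ ℝⁿ, and S a real m×n matrix. Let U be a real n×c matrix with orthonormal columns whose column space equals the column space of A. Let x* ∈ ℝ^d be a minimizer of x ↦ ‖Ax − b‖₂ and let x′ ∈ ℝ^d be a minimizer of x ↦ ‖SAx − Sb‖₂. Suppose that ‖UᵀSᵀSU − I_c‖₂ ≤ 1/2 and that, for some ε > 0, ‖UᵀSᵀS(Ax* − b)‖₂ ≤ 3√ε·‖Ax* − b‖₂. Then ‖Ax′ − b‖₂² ≤ (1 + 36ε)·‖Ax* − b‖₂². -/

import Mathlib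

open Matrix

/-- The Euclidean norm of a vector in `ℝ^n`. -/
noncomputable def euclNorm {n : ℕ} (x : Fin n → ℝ) : ℝ := Real.sqrt (∑ i, (x i) ^ 2)

/-- The spectral norm of a real matrix: `sup_{x ≠ 0} ‖Mx‖₂ / ‖x‖₂`. -/
noncomputable def specNorm {m n : ℕ} (M : Matrix (Fin m) (Fin n) ℝ) : ℝ :=
  sSup ((fun x : Fin n → ℝ => euclNorm (M.mulVec x) / euclNorm x) '' {x | x ≠ 0})

lemma euclNorm_eq_norm {n : ℕ} (x : Fin n → ℝ) :
    euclNorm x = ‖(WithLp.equiv 2 (Fin n → ℝ)).symm x‖ := by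
  rw [EuclideanSpace.norm_eq, euclNorm]
  simp [Real.norm_eq_abs, sq_abs]

lemma euclNorm_nonneg {n : ℕ} (x : Fin n → ℝ) : 0 ≤ euclNorm x := Real.sqrt_nonneg _

lemma euclNorm_zero {n : ℕ} : euclNorm (0 : Fin n → ℝ) = 0 := by simp [euclNorm]

lemma euclNorm_pos {n : ℕ} {x : Fin n → ℝ} (hx : x ≠ 0) : 0 < euclNorm x := by
  rw [euclNorm_eq_norm]
  exact norm_pos_iff.2 (by simpa using hx)

lemma euclNorm_add_le {n : ℕ} (x y : Fin n → ℝ) :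
    euclNorm (x + y) ≤ euclNorm x + euclNorm y := by
  simp only [euclNorm_eq_norm]
  exact norm_add_le _ _

lemma euclNorm_neg {n : ℕ} (x : Fin n → ℝ) : euclNorm (-x) = euclNorm x := by
  simp only [euclNorm_eq_norm]
  exact norm_neg _

lemma euclNorm_sq {n : ℕ} (x : Fin n → ℝ) : euclNorm x ^ 2 = x ⬝ᵥ x := by
  rw [euclNorm, Real.sq_sqrt (Finset.sum_nonneg fun i _ => sq_nonneg _)]
  simp [dotProduct, sq]

lemma dot_self_nonneg {n : ℕ} (x : Fin n → ℝ) : 0 ≤ x ⬝ᵥ x := by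
  rw [← euclNorm_sq]; positivity

/-- A spectral norm bound gives a pointwise bound. -/
lemma specNorm_bound {m n : ℕ} {M : Matrix (Fin m) (Fin n) ℝ} {C : ℝ} (hC : 0 ≤ C)
    (h : specNorm M ≤ C) (x : Fin n → ℝ) : euclNorm (M.mulVec x) ≤ C * euclNorm x := by
  rcases eq_or_ne x 0 with rfl | hx
  · simp [Matrix.mulVec_zero, euclNorm_zero]
  · set T : EuclideanSpace ℝ (Fin n) →L[ℝ] EuclideanSpace ℝ (Fin m) :=
      LinearMap.toContinuousLinearMap (Matrix.toEuclideanLin M) with hT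
    have hbdd : BddAbove ((fun x : Fin n → ℝ => euclNorm (M.mulVec x) / euclNorm x) '' {x | x ≠ 0}) := by
      refine ⟨‖T‖, ?_⟩
      rintro r ⟨y, hy, rfl⟩
      have hy0 : (0 : ℝ) < euclNorm y := euclNorm_pos hy
      rw [div_le_iff₀ hy0]
      have : euclNorm (M.mulVec y) = ‖T ((WithLp.equiv 2 (Fin n → ℝ)).symm y)‖ := by
        rw [euclNorm_eq_norm]
        simp [hT, Matrix.toEuclideanLin_apply]
      rw [this, euclNorm_eq_norm]
      exact T.le_opNorm _
    have hmem : euclNorm (M.mulVec x) / euclNorm x ≤ specNorm M :=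
      le_csSup hbdd ⟨x, hx, rfl⟩
    have hx0 : (0 : ℝ) < euclNorm x := euclNorm_pos hx
    have := (div_le_iff₀ hx0).1 (hmem.trans h)
    linarith

/-- Normal equations for a least-squares minimizer. -/
lemma normalEq {n d : ℕ} (B : Matrix (Fin n) (Fin d) ℝ) (b : Fin n → ℝ) (x0 : Fin d → ℝ)
    (h : ∀ x, euclNorm (B.mulVec x0 - b) ≤ euclNorm (B.mulVec x - b)) :
    ∀ y, B.mulVec y ⬝ᵥ (B.mulVec x0 - b) = 0 := by
  intro y
  set w : Fin n → ℝ := B.mulVec x0 - b with hw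
  set v : Fin n → ℝ := B.mulVec y with hv
  have key : ∀ t : ℝ, 0 ≤ 2 * t * (v ⬝ᵥ w) + t ^ 2 * (v ⬝ᵥ v) := by
    intro t
    have expand : B.mulVec (x0 + t • y) - b = w + t • v := by
      rw [Matrix.mulVec_add, Matrix.mulVec_smul, hw, hv]; abel
    have h1 : euclNorm w ≤ euclNorm (w + t • v) := by
      rw [← expand]; exact h _
    have h2 : w ⬝ᵥ w ≤ (w + t • v) ⬝ᵥ (w + t • v) := by
      rw [← euclNorm_sq, ← euclNorm_sq]
      exact pow_le_pow_left₀ (euclNorm_nonneg w) h1 2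
    have h3 : (w + t • v) ⬝ᵥ (w + t • v)
        = w ⬝ᵥ w + 2 * t * (v ⬝ᵥ w) + t ^ 2 * (v ⬝ᵥ v) := by
      simp only [dotProduct_add, add_dotProduct, smul_dotProduct, dotProduct_smul,
        smul_eq_mul, dotProduct_comm w v]
      ring
    rw [h3] at h2
    linarith
  set a : ℝ := v ⬝ᵥ w with ha
  set c : ℝ := v ⬝ᵥ v with hc
  have hc0 : 0 ≤ c := dot_self_nonneg v
  have hcp : (0 : ℝ) < c + 1 := by linarith
  have h0 := key (-a / (c + 1))
  have heq : 2 * (-a / (c + 1)) * a + (-a / (c + 1)) ^ 2 * c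
      = (-2 * a ^ 2 * (c + 1) + a ^ 2 * c) / (c + 1) ^ 2 := by
    field_simp
  rw [heq] at h0
  have hposninv : (0 : ℝ) < (c + 1) ^ 2 := by positivity
  have h4 : 0 ≤ -2 * a ^ 2 * (c + 1) + a ^ 2 * c := by
    by_contra hcon
    push_neg at hcon
    have := div_neg_of_neg_of_pos hcon hposninv
    linarith
  have hsq : a ^ 2 = 0 := by nlinarith [sq_nonneg a]
  exact pow_eq_zero_iff (by norm_num) |>.1 hsq

set_option maxHeartbeats 1000000 in
/-- sketched least-squares regression guarantee. -/
theorem stmt7 {n d m c : ℕ} (A : Matrix (Fin n) (Fin d) ℝ) (b : Fin n → ℝ)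
    (S : Matrix (Fin m) (Fin n) ℝ) (U : Matrix (Fin n) (Fin c) ℝ)
    (hUorth : Uᵀ * U = 1)
    (hUspan : ∀ y : Fin n → ℝ,
      (∃ x : Fin d → ℝ, A.mulVec x = y) ↔ (∃ z : Fin c → ℝ, U.mulVec z = y))
    (xstar : Fin d → ℝ)
    (hxstar : ∀ x : Fin d → ℝ, euclNorm (A.mulVec xstar - b) ≤ euclNorm (A.mulVec x - b))
    (x' : Fin d → ℝ)
    (hx' : ∀ x : Fin d → ℝ,
      euclNorm ((S * A).mulVec x' - S.mulVec b) ≤ euclNorm ((S * A).mulVec x - S.mulVec b))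
    (h1 : specNorm (Uᵀ * Sᵀ * S * U - 1) ≤ 1 / 2)
    (ε : ℝ) (hε : 0 < ε)
    (h2 : euclNorm ((Uᵀ * Sᵀ * S).mulVec (A.mulVec xstar - b))
        ≤ 3 * Real.sqrt ε * euclNorm (A.mulVec xstar - b)) :
    euclNorm (A.mulVec x' - b) ^ 2 ≤ (1 + 36 * ε) * euclNorm (A.mulVec xstar - b) ^ 2 := by
  set w : Fin n → ℝ := A.mulVec xstar - b with hw
  set w' : Fin n → ℝ := A.mulVec x' - b with hw'
  -- w' - w lies in the column span of A, hence of U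
  obtain ⟨z, hz⟩ : ∃ z : Fin c → ℝ, U.mulVec z = w' - w := by
    refine (hUspan (w' - w)).1 ⟨x' - xstar, ?_⟩
    rw [Matrix.mulVec_sub, hw, hw']; abel
  -- normal equations
  have hA : ∀ y, A.mulVec y ⬝ᵥ w = 0 := normalEq A b xstar hxstar
  have hSA : ∀ y, (S * A).mulVec y ⬝ᵥ ((S * A).mulVec x' - S.mulVec b) = 0 :=
    normalEq (S * A) (S.mulVec b) x' hx'
  have hres : (S * A).mulVec x' - S.mulVec b = S.mulVec w' := by
    rw [hw', Matrix.mulVec_sub, Matrix.mulVec_mulVec]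
  -- Uᵀ Sᵀ S w' = 0
  have hkey : (Uᵀ * Sᵀ * S).mulVec w' = 0 := by
    funext j
    obtain ⟨xj, hxj⟩ : ∃ x : Fin d → ℝ, A.mulVec x = U.mulVec (Pi.single j 1) :=
      (hUspan _).2 ⟨Pi.single j 1, rfl⟩
    have step1 : (Uᵀ * Sᵀ * S).mulVec w' = Uᵀ.mulVec (Sᵀ.mulVec (S.mulVec w')) := by
      rw [Matrix.mulVec_mulVec, Matrix.mulVec_mulVec]
    have step2 : Uᵀ.mulVec (Sᵀ.mulVec (S.mulVec w')) j
        = U.mulVec (Pi.single j 1) ⬝ᵥ Sᵀ.mulVec (S.mulVec w') := by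
      simp [Matrix.mulVec, dotProduct, Matrix.transpose_apply, Pi.single_apply, mul_ite,
        mul_one, mul_zero, Finset.sum_ite_eq']
    have step3 : U.mulVec (Pi.single j 1) ⬝ᵥ Sᵀ.mulVec (S.mulVec w')
        = S.mulVec (U.mulVec (Pi.single j 1)) ⬝ᵥ S.mulVec w' := by
      rw [Matrix.dotProduct_mulVec, ← Matrix.mulVec_transpose, Matrix.transpose_transpose]
    have step4 : S.mulVec (U.mulVec (Pi.single j 1)) ⬝ᵥ S.mulVec w' = 0 := by
      rw [← hxj, Matrix.mulVec_mulVec]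
      have := hSA xj
      rwa [hres] at this
    rw [step1]
    show Uᵀ.mulVec (Sᵀ.mulVec (S.mulVec w')) j = 0
    rw [step2, step3, step4]
  -- key vector identity
  have hzvec : (Uᵀ * Sᵀ * S * U).mulVec z = -((Uᵀ * Sᵀ * S).mulVec w) := by
    rw [← Matrix.mulVec_mulVec, hz, Matrix.mulVec_sub, hkey]
    abel
  -- norm bound on z
  have hMz : euclNorm ((Uᵀ * Sᵀ * S * U).mulVec z) ≤ 3 * Real.sqrt ε * euclNorm w := by
    rw [hzvec, euclNorm_neg]; exact h2
  have hMz' : euclNorm (((Uᵀ * Sᵀ * S * U) - 1).mulVec z) ≤ (1 / 2) * euclNorm z :=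
    specNorm_bound (by norm_num) h1 z
  have hzsplit : z = (Uᵀ * Sᵀ * S * U).mulVec z + -(((Uᵀ * Sᵀ * S * U) - 1).mulVec z) := by
    rw [Matrix.sub_mulVec, Matrix.one_mulVec]
    abel
  have htri : euclNorm z ≤ euclNorm ((Uᵀ * Sᵀ * S * U).mulVec z)
      + euclNorm (((Uᵀ * Sᵀ * S * U) - 1).mulVec z) := by
    have h5 := euclNorm_add_le ((Uᵀ * Sᵀ * S * U).mulVec z)
      (-(((Uᵀ * Sᵀ * S * U) - 1).mulVec z))
    rw [← hzsplit, euclNorm_neg] at h5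
    exact h5
  have hzbound : euclNorm z ≤ 6 * Real.sqrt ε * euclNorm w := by
    nlinarith [htri, hMz, hMz']
  have hzsq : z ⬝ᵥ z ≤ 36 * ε * (w ⬝ᵥ w) := by
    have := pow_le_pow_left₀ (euclNorm_nonneg z) hzbound 2
    rw [euclNorm_sq] at this
    have hexp : (6 * Real.sqrt ε * euclNorm w) ^ 2 = 36 * ε * euclNorm w ^ 2 := by
      rw [mul_pow, mul_pow, Real.sq_sqrt hε.le]; ring
    rw [hexp, euclNorm_sq] at this
    exact this
  -- Pythagoras
  have hw'eq : w' = w + U.mulVec z := by rw [hz]; abel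
  have horth : U.mulVec z ⬝ᵥ w = 0 := by
    obtain ⟨mz, hm⟩ : ∃ x : Fin d → ℝ, A.mulVec x = U.mulVec z := (hUspan _).2 ⟨z, rfl⟩
    rw [← hm]; exact hA mz
  have hUzUz : U.mulVec z ⬝ᵥ U.mulVec z = z ⬝ᵥ z := by
    rw [Matrix.dotProduct_mulVec, ← Matrix.mulVec_transpose, Matrix.mulVec_mulVec, hUorth,
      Matrix.one_mulVec]
  have hpyth : euclNorm w' ^ 2 = euclNorm w ^ 2 + z ⬝ᵥ z := by
    rw [euclNorm_sq, euclNorm_sq, hw'eq]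
    simp only [dotProduct_add, add_dotProduct, dotProduct_comm w (U.mulVec z), horth, hUzUz]
    ring
  rw [hpyth, euclNorm_sq]
  have : w ⬝ᵥ w = euclNorm w ^ 2 := (euclNorm_sq w).symm
  nlinarith [hzsq, euclNorm_sq w]
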